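/- Let H be a complex (or real) inner product space and let f, g, h ∈ H. If Re⟨h + λ·g, g + λ·f⟩ ≤ 0 for every λ > 0, then ‖g‖² ≤ 2·‖f‖·‖h‖. -/

import Mathlib

/-- The Kato inequality (1.2): restricted dissipativity for all λ > 0 implies
‖g‖² ≤ 2‖f‖‖h‖. -/
theorem kato_inequality_from_dissipativity
    {H : Type*} [NormedAddCommGroup H] [InnerProductSpace ℂ H]
    (f g h : H)
    (hdis : ∀ l : ℝ, 0 < l →
      (inner ℂ (h + (l : ℂ) • g) (g + (l : ℂ) • f) : ℂ).re ≤ 0) :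
    ‖g‖ ^ 2 ≤ 2 * ‖f‖ * ‖h‖ := by
  have key : ∀ l : ℝ, 0 < l → l^2 * ‖g‖^2 ≤ ‖h‖^2 + l^4 * ‖f‖^2 := by
    intro l hl
    set a : H := h + (l : ℂ) • g with ha
    set b : H := (l : ℂ) • (g + (l : ℂ) • f) with hb
    have hab : (inner ℂ a b : ℂ).re ≤ 0 := by
      rw [hb, inner_smul_right]
      have hd := hdis l hl
      simp only [Complex.mul_re, Complex.ofReal_re, Complex.ofReal_im]
      nlinarith [hd]
    have h1 : ‖a + b‖^2 ≤ ‖a - b‖^2 := by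
      have e1 := norm_add_sq (𝕜 := ℂ) a b
      have e2 := norm_sub_sq (𝕜 := ℂ) a b
      have hab' : RCLike.re (inner ℂ a b : ℂ) ≤ 0 := hab
      rw [e1, e2]; linarith
    have habm : a - b = h - ((l^2 : ℝ) : ℂ) • f := by
      rw [ha, hb]; push_cast; module
    -- parallelogram 1 : with x = a+b, y = h + l² f ; x - y = (2l) g
    have p1 := parallelogram_law_with_norm ℂ (a + b) (h + ((l^2 : ℝ) : ℂ) • f)
    have heq : (a + b) - (h + ((l^2 : ℝ) : ℂ) • f) = ((2*l : ℝ) : ℂ) • g := by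
      rw [ha, hb]; push_cast; module
    rw [heq] at p1
    -- parallelogram 2 : with h, l² f
    have p2 := parallelogram_law_with_norm ℂ h (((l^2 : ℝ) : ℂ) • f)
    have habm' : ‖a - b‖ = ‖h - ((l^2 : ℝ) : ℂ) • f‖ := by rw [habm]
    have n1 : ‖((2*l : ℝ) : ℂ) • g‖ = (2*l) * ‖g‖ := by
      rw [norm_smul]; simp [abs_of_pos hl, abs_of_pos (by linarith : (0:ℝ) < 2*l)]
    have n2 : ‖((l^2 : ℝ) : ℂ) • f‖ = l^2 * ‖f‖ := by
      rw [norm_smul]; simp [abs_of_pos (pow_pos hl 2)]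
    rw [n1] at p1
    rw [n2] at p2
    have h1' : ‖a + b‖ * ‖a + b‖ ≤ ‖h - ((l^2 : ℝ) : ℂ) • f‖ * ‖h - ((l^2 : ℝ) : ℂ) • f‖ := by
      have := h1
      rw [habm] at this
      nlinarith [this]
    nlinarith [mul_self_nonneg ‖(a+b) + (h + ((l^2 : ℝ) : ℂ) • f)‖, h1', p1, p2]
  by_cases hh : ‖h‖ = 0
  · -- then ‖g‖ = 0 and both sides behave
    have hg : ‖g‖ = 0 := by
      by_contra hg
      have hgpos : 0 < ‖g‖ := (norm_nonneg g).lt_of_ne (Ne.symm hg)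
      by_cases hf : ‖f‖ = 0
      · have := key 1 one_pos
        rw [hh, hf] at this
        nlinarith
      · have hfpos : 0 < ‖f‖ := (norm_nonneg f).lt_of_ne (Ne.symm hf)
        have hl : 0 < ‖g‖ / (2*‖f‖) := by positivity
        have hkey := key _ hl
        rw [hh] at hkey
        have h4 : (‖g‖ / (2*‖f‖))^4 * ‖f‖^2 = (‖g‖ / (2*‖f‖))^2 * ‖g‖^2 / 4 := by
          field_simp; ring
        rw [h4] at hkey
        nlinarith [hkey, mul_pos (pow_pos hl 2) (pow_pos hgpos 2)]
    rw [hg, hh]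
    nlinarith [norm_nonneg f]
  · have hhpos : 0 < ‖h‖ := (norm_nonneg h).lt_of_ne (Ne.symm hh)
    by_cases hf : ‖f‖ = 0
    · have hg : ‖g‖ = 0 := by
        by_contra hg
        have hgpos : 0 < ‖g‖ := (norm_nonneg g).lt_of_ne (Ne.symm hg)
        have hl : 0 < (‖h‖ + ‖g‖) / ‖g‖ := by positivity
        have hkey := key _ hl
        rw [hf] at hkey
        have hll : ((‖h‖ + ‖g‖) / ‖g‖) * ‖g‖ = ‖h‖ + ‖g‖ := by field_simp
        nlinarith [hkey, hll, hgpos, hhpos]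
      rw [hg, hf]
      norm_num
    · have hfpos : 0 < ‖f‖ := (norm_nonneg f).lt_of_ne (Ne.symm hf)
      set l : ℝ := Real.sqrt (‖h‖ / ‖f‖) with hldef
      have hlpos : 0 < l := Real.sqrt_pos.mpr (by positivity)
      have hsq : l^2 = ‖h‖ / ‖f‖ := Real.sq_sqrt (by positivity)
      have hl2 : l^2 * ‖f‖ = ‖h‖ := by rw [hsq]; field_simp
      have hkey := key l hlpos
      have h4 : l^4 * ‖f‖^2 = (l^2 * ‖f‖) * (l^2 * ‖f‖) := by ring
      rw [h4, hl2] at hkey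
      nlinarith [hkey, hl2, pow_pos hlpos 2, sq_nonneg l]
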